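/- Relative control error estimator: suppose (u,y,p) solves the full optimality system and (u_N, y_N, p_N) solves the reduced optimality system, with u_N ≠ 0. Let Δ_u := (1/(ρ₁ √α β))‖r_y‖_{Y*} + (κ/(α β))‖r_p‖_{Y*}. If 2Δ_u/‖u_N‖_U ≤ 1, then ‖u − u_N‖_U / ‖u‖_U ≤ 2Δ_u / ‖u_N‖_U. -/

import Mathlib

open RealInnerProductSpace

private lemma quad_div14 (β x R : ℝ) (hβ : 0 < β) (hx : 0 ≤ x) (hR : 0 ≤ R)
    (h : β*x^2 ≤ R*x) : x ≤ R/β := by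
  rw [le_div_iff₀ hβ]
  rcases hx.eq_or_lt with h0 | h0
  · nlinarith
  · nlinarith

private lemma aux14 (s c d X t : ℝ) (hs : 0 < s) (hc : 0 ≤ c) (hd : 0 ≤ d) (hX : 0 ≤ X)
    (ht : 0 ≤ t) (h : s^2*X^2 + t^2 ≤ c*t + d*X) : 2*s^2*X ≤ s*c + 2*d := by
  have h1 : s^2*X^2 ≤ c^2/4 + d*X := by nlinarith [sq_nonneg (t - c/2)]
  by_contra hn
  push_neg at hn
  have hX0 : 0 < X := by nlinarith [mul_pos hs hs]
  have h3 : s*c*X < c^2/2 := by nlinarith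
  rcases hc.eq_or_lt with hc0 | hc0
  · nlinarith
  · have hXc : X < c/(2*s) := by rw [lt_div_iff₀ (by positivity)]; nlinarith
    nlinarith

set_option maxHeartbeats 1000000 in
theorem stmt_14
    {Y U H : Type*}
    [NormedAddCommGroup Y] [InnerProductSpace ℝ Y] [CompleteSpace Y]
    [NormedAddCommGroup U] [InnerProductSpace ℝ U] [CompleteSpace U]
    [NormedAddCommGroup H] [InnerProductSpace ℝ H] [CompleteSpace H]
    (E : Y →L[ℝ] H) (ρ₁ : ℝ) (hρ₁ : 0 < ρ₁)
    (hE : ∀ y : Y, ‖E y‖ ≤ (1 / ρ₁) * ‖y‖)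
    (a : Y →ₗ[ℝ] Y →ₗ[ℝ] ℝ) (γ β : ℝ) (hγ : 0 < γ) (hβ : 0 < β)
    (ha_cont : ∀ y v : Y, |a y v| ≤ γ * ‖y‖ * ‖v‖)
    (ha_coer : ∀ y : Y, β * ‖y‖ ^ 2 ≤ a y y)
    (b : U →ₗ[ℝ] Y →ₗ[ℝ] ℝ) (κ : ℝ) (hκ : 0 < κ)
    (hb_cont : ∀ (w : U) (v : Y), |b w v| ≤ κ * ‖w‖ * ‖v‖)
    (f : Y →L[ℝ] ℝ) (z : H) (α : ℝ) (hα : 0 < α)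
    (Uad : Set U) (hUne : Uad.Nonempty) (hUcl : IsClosed Uad) (hUcx : Convex ℝ Uad)
    (u : U) (y p : Y) (hu : u ∈ Uad)
    (hy : ∀ v : Y, a y v = b u v + f v)
    (hp : ∀ v : Y, a v p = ⟪E y - z, E v⟫)
    (hvi : ∀ v ∈ Uad, 0 ≤ b (v - u) p + α * ⟪u, v - u⟫)
    (YN : Submodule ℝ Y) (hYN : IsClosed (YN : Set Y))
    (uN : U) (yN pN : Y) (huN : uN ∈ Uad) (hyNm : yN ∈ YN) (hpNm : pN ∈ YN)
    (hyN : ∀ v ∈ YN, a yN v = b uN v + f v)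
    (hpN : ∀ v ∈ YN, a v pN = ⟪E yN - z, E v⟫)
    (hviN : ∀ v ∈ Uad, 0 ≤ b (v - uN) pN + α * ⟪uN, v - uN⟫)
    (ry : Y →L[ℝ] ℝ) (hry : ∀ v : Y, ry v = b uN v + f v - a yN v)
    (rp : Y →L[ℝ] ℝ) (hrp : ∀ v : Y, rp v = ⟪E yN - z, E v⟫ - a v pN)
    (huN0 : uN ≠ 0)
    (hcond : 2 * ((1 / (ρ₁ * Real.sqrt α * β)) * ‖ry‖ + (κ / (α * β)) * ‖rp‖) / ‖uN‖ ≤ 1) :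
    ‖u - uN‖ / ‖u‖ ≤
      2 * ((1 / (ρ₁ * Real.sqrt α * β)) * ‖ry‖ + (κ / (α * β)) * ‖rp‖) / ‖uN‖ := by
  set s := Real.sqrt α with hs_def
  have hs : 0 < s := Real.sqrt_pos.mpr hα
  have hs2 : s^2 = α := Real.sq_sqrt hα.le
  set D : ℝ := (1 / (ρ₁ * s * β)) * ‖ry‖ + (κ / (α * β)) * ‖rp‖ with hD_def
  have hDnn : 0 ≤ D := by positivity
  -- Lax-Milgram: solve a(w, ·) = ry
  obtain ⟨w, haw⟩ : ∃ w : Y, ∀ v : Y, a w v = ry v := by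
    let A : Y →L[ℝ] Y →L[ℝ] ℝ :=
      LinearMap.mkContinuous₂ a γ (fun m n => by
        rw [Real.norm_eq_abs]; exact ha_cont m n)
    have hA : ∀ m n : Y, A m n = a m n := fun _ _ => rfl
    have coercA : IsCoercive A := by
      refine ⟨β, hβ, fun v => ?_⟩
      rw [hA]
      calc β * ‖v‖ * ‖v‖ = β * ‖v‖^2 := by ring
      _ ≤ a v v := ha_coer v
    refine ⟨coercA.continuousLinearEquivOfBilin.symm
      ((InnerProductSpace.toDual ℝ Y).symm ry), fun v => ?_⟩
    rw [← hA, ← coercA.continuousLinearEquivOfBilin_apply,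
      ContinuousLinearEquiv.apply_symm_apply]
    exact InnerProductSpace.toDual_symm_apply
  -- norm of w
  have hwn : ‖w‖ ≤ ‖ry‖ / β := by
    refine quad_div14 _ _ _ hβ (norm_nonneg _) (norm_nonneg _) ?_
    calc β * ‖w‖^2 ≤ a w w := ha_coer w
    _ = ry w := haw w
    _ ≤ |ry w| := le_abs_self _
    _ ≤ ‖ry‖ * ‖w‖ := by simpa [Real.norm_eq_abs] using ry.le_opNorm w
  -- error e = y - (yN + w)
  set e : Y := y - (yN + w) with he_def
  have hae : ∀ v : Y, a e v = b u v - b uN v := by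
    intro v
    have hexp : a e v = a y v - (a yN v + a w v) := by
      simp [he_def, map_sub, map_add, LinearMap.sub_apply, LinearMap.add_apply]
    have h1 := hy v
    have h2 := hry v
    have h3 := haw v
    rw [hexp, h1, h3, h2]; ring
  -- norm of e
  have hen : ‖e‖ ≤ (κ * ‖u - uN‖) / β := by
    refine quad_div14 _ _ _ hβ (norm_nonneg _) (by positivity) ?_
    have h1 : a e e = b u e - b uN e := hae e
    have h2 : b u e - b uN e = b (u - uN) e := by
      simp [map_sub, LinearMap.sub_apply]
    calc β * ‖e‖^2 ≤ a e e := ha_coer e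
    _ = b (u - uN) e := by rw [h1, h2]
    _ ≤ |b (u - uN) e| := le_abs_self _
    _ ≤ κ * ‖u - uN‖ * ‖e‖ := hb_cont _ _
  -- variational inequality combination
  set X := ‖u - uN‖ with hX_def
  have hXnn : 0 ≤ X := norm_nonneg _
  have hsum : α * X^2 ≤ b (u - uN) pN - b (u - uN) p := by
    have h1 := hvi uN huN
    have h2 := hviN u hu
    have e1 : b (uN - u) p = b uN p - b u p := by simp [map_sub, LinearMap.sub_apply]
    have e2 : b (u - uN) pN = b u pN - b uN pN := by simp [map_sub, LinearMap.sub_apply]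
    have e3 : b (u - uN) p = b u p - b uN p := by simp [map_sub, LinearMap.sub_apply]
    have i1 : ⟪u, uN - u⟫ = ⟪u, uN⟫ - ⟪u, u⟫ := inner_sub_right u uN u
    have i2 : ⟪uN, u - uN⟫ = ⟪u, uN⟫ - ⟪uN, uN⟫ := by
      rw [inner_sub_right, real_inner_comm]
    have n1 : X^2 = ⟪u, u⟫ - 2*⟪u, uN⟫ + ⟪uN, uN⟫ := by
      rw [hX_def, @norm_sub_sq_real, real_inner_self_eq_norm_sq, real_inner_self_eq_norm_sq]
    rw [e1, i1] at h1
    rw [e2, i2] at h2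
    rw [e2, e3, n1]
    nlinarith [h1, h2]
  -- adjoint identities
  have hepN : a e pN = ⟪E yN - z, E e⟫ - rp e := by have := hrp e; linarith
  have hep : a e p = ⟪E y - z, E e⟫ := hp e
  have hdiff : b (u - uN) pN - b (u - uN) p
      = -‖E e‖^2 - ⟪E w, E e⟫ - rp e := by
    have hb1 : b (u - uN) pN = a e pN := by
      rw [hae pN]; simp [map_sub, LinearMap.sub_apply]
    have hb2 : b (u - uN) p = a e p := by
      rw [hae p]; simp [map_sub, LinearMap.sub_apply]
    have hEsplit : (⟪E yN - z, E e⟫ : ℝ) - ⟪E y - z, E e⟫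
        = -⟪E e, E e⟫ - ⟪E w, E e⟫ := by
      have h1 : (⟪E yN - z, E e⟫ : ℝ) - ⟪E y - z, E e⟫ = ⟪E yN - E y, E e⟫ := by
        rw [← inner_sub_left]; congr 1; abel
      have h2 : E yN - E y = -(E e + E w) := by
        rw [he_def]; simp [map_sub, map_add]; abel
      rw [h1, h2, inner_neg_left, inner_add_left]; ring
    rw [hb1, hb2, hepN, hep]
    rw [show (⟪E yN - z, E e⟫ : ℝ) - rp e - ⟪E y - z, E e⟫
        = (⟪E yN - z, E e⟫ - ⟪E y - z, E e⟫) - rp e by ring, hEsplit,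
      real_inner_self_eq_norm_sq]
  -- key quadratic inequality
  set t := ‖E e‖ with ht_def
  set c : ℝ := ‖ry‖ / (ρ₁ * β) with hc_def
  set d : ℝ := κ * ‖rp‖ / β with hd_def
  have hcnn : 0 ≤ c := by positivity
  have hdnn : 0 ≤ d := by positivity
  have hEw : ‖E w‖ ≤ c := by
    calc ‖E w‖ ≤ (1/ρ₁) * ‖w‖ := hE w
    _ ≤ (1/ρ₁) * (‖ry‖ / β) := by
        apply mul_le_mul_of_nonneg_left hwn (by positivity)
    _ = c := by rw [hc_def]; field_simp
  have hmain : s^2 * X^2 + t^2 ≤ c*t + d*X := by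
    rw [hs2]
    have h1 : α * X^2 + t^2 ≤ -⟪E w, E e⟫ - rp e := by
      have := hsum
      rw [hdiff] at this
      linarith
    have h2 : -⟪E w, E e⟫ ≤ ‖E w‖ * t := by
      have := abs_real_inner_le_norm (E w) (E e)
      rw [← ht_def] at this
      linarith [neg_abs_le (⟪E w, E e⟫ : ℝ)]
    have h3 : -(rp e) ≤ ‖rp‖ * ‖e‖ := by
      have h := rp.le_opNorm e
      rw [Real.norm_eq_abs] at h
      linarith [neg_abs_le (rp e), le_abs_self (rp e)]
    have h4 : ‖E w‖ * t ≤ c * t := by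
      apply mul_le_mul_of_nonneg_right hEw (norm_nonneg _)
    have h5 : ‖rp‖ * ‖e‖ ≤ ‖rp‖ * ((κ * X) / β) := by
      apply mul_le_mul_of_nonneg_left hen (norm_nonneg _)
    have h6 : ‖rp‖ * ((κ * X) / β) = d * X := by rw [hd_def]; field_simp
    linarith
  have hkey : 2*s^2*X ≤ s*c + 2*d :=
    aux14 s c d X t hs hcnn hdnn hXnn (norm_nonneg _) hmain
  -- X ≤ D
  have hXD : X ≤ D := by
    have h1 : X ≤ (s*c + 2*d) / (2*s^2) := by
      rw [le_div_iff₀ (by positivity)]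
      linarith
    have e1 : (s*c + 2*d)/(2*s^2) = c/(2*s) + d/s^2 := by
      field_simp
    have e2 : c/(2*s) ≤ c/s := by gcongr; linarith
    have e3 : c/s = (1/(ρ₁*s*β))*‖ry‖ := by
      rw [hc_def]
      field_simp
    have e4 : d/s^2 = (κ/(α*β))*‖rp‖ := by
      rw [hd_def, hs2]
      field_simp
    rw [hD_def]
    rw [e1] at h1
    rw [← e3, ← e4]
    linarith
  -- conclude
  have huNpos : 0 < ‖uN‖ := norm_pos_iff.mpr huN0
  have h2D : 2 * D ≤ ‖uN‖ := by
    rw [div_le_one huNpos] at hcond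
    exact hcond
  have htri : ‖uN‖ - ‖u‖ ≤ X := by
    calc ‖uN‖ - ‖u‖ ≤ ‖uN - u‖ := norm_sub_norm_le uN u
    _ = X := by rw [hX_def, norm_sub_rev]
  have hupos : 0 < ‖u‖ := by
    have : ‖uN‖/2 ≤ ‖u‖ := by linarith
    linarith
  rw [div_le_div_iff₀ hupos huNpos]
  have h2u : ‖uN‖ ≤ 2 * ‖u‖ := by linarith
  nlinarith [mul_le_mul_of_nonneg_right hXD huNpos.le,
    mul_le_mul_of_nonneg_left h2u hDnn]
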